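/- arXiv:math/0503274 — 3 statements merged into one kernel-verified Lean document; each statement's English description precedes it below -/
import Mathlib

section
/- Let α ≤ β be real numbers and define θ[α,β;t] := α for t ≤ α, θ[α,β;t] := t for α ≤ t ≤ β, and θ[α,β;t] := β for t ≥ β. Define θ'[α,β;t] := ∫_{-∞}^{∞} θ[α,β;r+t]·(e^{-|r|}/2) dr. Then for every real t, θ'[α,β;t] = θ[α,β;t] + (e^{-|t-α|} - e^{-|t-β|})/2; in particular |θ'[α,β;t] - θ[α,β;t]| ≤ 1. -/
open MeasureTheory Set Filter Real
open scoped Topology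

/-- The projection of ℝ onto the interval [α,β]. -/
noncomputable def thetaProj (α β t : ℝ) : ℝ := max α (min t β)

/-- The smooth-out of the projection: convolution with the density e^{-|r|}/2. -/
noncomputable def thetaProj' (α β t : ℝ) : ℝ :=
  ∫ r : ℝ, thetaProj α β (r + t) * (Real.exp (-|r|) / 2)


/-- FTC on `(a, ∞)` for `(x - a) e^{-x}/2`. -/
lemma base_ioi (a : ℝ) :
    IntegrableOn (fun x : ℝ => (x - a) * Real.exp (-x) / 2) (Ioi a) ∧
    ∫ x in Ioi a, (x - a) * Real.exp (-x) / 2 = Real.exp (-a) / 2 := by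
  have hderiv : ∀ x ∈ Ici a,
      HasDerivAt (fun x : ℝ => -(x - a + 1) * Real.exp (-x) / 2)
        ((x - a) * Real.exp (-x) / 2) x := by
    intro x _
    have h1 : HasDerivAt (fun x : ℝ => Real.exp (-x)) (-Real.exp (-x)) x := by
      simpa [Function.comp_def] using (Real.hasDerivAt_exp (-x)).comp x ((hasDerivAt_id x).neg)
    have h2 : HasDerivAt (fun x : ℝ => -(x - a + 1)) (-1) x := by
      exact (((hasDerivAt_id x).sub_const a).add_const 1).neg
    have := (h2.mul h1).div_const 2
    refine this.congr_deriv ?_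
    ring
  have hpos : ∀ x ∈ Ioi a, 0 ≤ (x - a) * Real.exp (-x) / 2 := by
    intro x hx
    have : (0:ℝ) ≤ x - a := by have := mem_Ioi.1 hx; linarith
    positivity
  have htend : Tendsto (fun x : ℝ => -(x - a + 1) * Real.exp (-x) / 2) atTop (𝓝 0) := by
    have A : Tendsto (fun x : ℝ => x * Real.exp (-x)) atTop (𝓝 0) := by
      simpa using tendsto_pow_mul_exp_neg_atTop_nhds_zero 1
    have B := tendsto_exp_neg_atTop_nhds_zero
    have C : Tendsto (fun x : ℝ => (-(x * Real.exp (-x)) + (a - 1) * Real.exp (-x)) / 2)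
        atTop (𝓝 ((-(0:ℝ) + (a - 1) * 0) / 2)) :=
      (A.neg.add (B.const_mul (a - 1))).div_const 2
    simpa using C.congr (fun x => by ring)
  refine ⟨integrableOn_Ioi_deriv_of_nonneg' hderiv hpos htend, ?_⟩
  rw [integral_Ioi_of_hasDerivAt_of_nonneg' hderiv hpos htend]
  ring


lemma keyG (d : ℝ) :
    Integrable (fun r : ℝ => max (r - d) 0 * (Real.exp (-|r|) / 2)) ∧
    ∫ r : ℝ, max (r - d) 0 * (Real.exp (-|r|) / 2) = max (-d) 0 + Real.exp (-|d|) / 2 := by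
  set u : ℝ → ℝ := fun r => max (r - d) 0 * (Real.exp (-|r|) / 2) with hu
  have hu_cont : Continuous u :=
    ((continuous_id.sub continuous_const).max continuous_const).mul
      ((Real.continuous_exp.comp continuous_abs.neg).div_const 2)
  have hind : ∀ r, Set.indicator (Ioi d) u r = u r := by
    intro r
    apply Set.indicator_apply_eq_self.2
    intro hr
    have hrd : r ≤ d := le_of_not_gt (by simpa [mem_Ioi] using hr)
    simp [hu, max_eq_right (sub_nonpos.2 hrd)]
  have hindf : Set.indicator (Ioi d) u = u := funext hind
  rcases le_or_gt 0 d with hd | hd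
  · -- 0 ≤ d
    have hEq : EqOn (fun x : ℝ => (x - d) * Real.exp (-x) / 2) u (Ioi d) := by
      intro r hr
      have hr' : d < r := hr
      have h1 : (0:ℝ) ≤ r - d := by linarith
      have h2 : |r| = r := abs_of_pos (lt_of_le_of_lt hd hr')
      simp only [hu, h2, max_eq_left h1]
      ring
    have hIntOn : IntegrableOn u (Ioi d) := (base_ioi d).1.congr_fun hEq measurableSet_Ioi
    have hInt : Integrable u := by
      rw [← hindf]
      exact (integrable_indicator_iff measurableSet_Ioi).2 hIntOn
    refine ⟨hInt, ?_⟩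
    rw [← hindf, integral_indicator measurableSet_Ioi,
      setIntegral_congr_fun measurableSet_Ioi hEq.symm, (base_ioi d).2,
      max_eq_right (neg_nonpos.2 hd), abs_of_nonneg hd]
    ring
  · -- d < 0
    have hIoc : IntegrableOn u (Ioc d 0) := hu_cont.integrableOn_Ioc
    have hexp : IntegrableOn (fun r : ℝ => Real.exp (-r) / 2) (Ioi (0:ℝ)) := by
      simpa [IntegrableOn] using (exp_neg_integrableOn_Ioi 0 one_pos).div_const 2
    have hEq0 : EqOn (fun r : ℝ => (r - 0) * Real.exp (-r) / 2 + -d * (Real.exp (-r) / 2)) u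
        (Ioi (0:ℝ)) := by
      intro r hr
      have hr' : (0:ℝ) < r := hr
      have h1 : (0:ℝ) ≤ r - d := by linarith
      have h2 : |r| = r := abs_of_pos hr'
      simp only [hu, h2, max_eq_left h1]
      ring
    have hadd : IntegrableOn (fun r : ℝ => (r - 0) * Real.exp (-r) / 2 + -d * (Real.exp (-r) / 2))
        (Ioi (0:ℝ)) := by exact (base_ioi 0).1.add (hexp.const_mul (-d))
    have hIoi : IntegrableOn u (Ioi (0:ℝ)) := hadd.congr_fun hEq0 measurableSet_Ioi
    have hIntOn : IntegrableOn u (Ioi d) := by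
      have := hIoc.union hIoi
      rwa [Ioc_union_Ioi_eq_Ioi hd.le] at this
    have hInt : Integrable u := by
      rw [← hindf]
      exact (integrable_indicator_iff measurableSet_Ioi).2 hIntOn
    refine ⟨hInt, ?_⟩
    have hEqc : EqOn u (fun x : ℝ => (x - d) * Real.exp x / 2) (Ioc d 0) := by
      intro r hr
      have h1 : (0:ℝ) ≤ r - d := by have := hr.1; linarith
      have h2 : |r| = -r := abs_of_nonpos hr.2
      simp only [hu, h2, max_eq_left h1, neg_neg]
      ring
    have hIocval : ∫ r in Ioc d 0, u r = (-d - 1 + Real.exp d) / 2 := by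
      rw [setIntegral_congr_fun measurableSet_Ioc hEqc, ← intervalIntegral.integral_of_le hd.le]
      have : ∀ x ∈ uIcc d 0, HasDerivAt (fun x : ℝ => (x - d - 1) * Real.exp x / 2)
          ((x - d) * Real.exp x / 2) x := by
        intro x _
        have h2 : HasDerivAt (fun x : ℝ => x - d - 1) 1 x := by
          simpa using ((hasDerivAt_id x).sub_const d).sub_const 1
        have := (h2.mul (Real.hasDerivAt_exp x)).div_const 2
        refine this.congr_deriv ?_
        ring
      have hc2 : Continuous fun x : ℝ => (x - d) * Real.exp x / 2 :=
        ((continuous_id.sub continuous_const).mul Real.continuous_exp).div_const 2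
      rw [intervalIntegral.integral_eq_sub_of_hasDerivAt this (hc2.intervalIntegrable _ _)]
      simp [Real.exp_zero]
      ring
    have hIoival : ∫ r in Ioi (0:ℝ), u r = 1 / 2 + -d / 2 := by
      rw [setIntegral_congr_fun measurableSet_Ioi hEq0.symm,
        integral_add ((base_ioi 0).1) (hexp.const_mul (-d)), (base_ioi 0).2]
      have : ∫ r in Ioi (0:ℝ), -d * (Real.exp (-r) / 2) = -d * (1 / 2) := by
        rw [integral_const_mul]
        have : ∫ r in Ioi (0:ℝ), Real.exp (-r) / 2 = 1 / 2 := by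
          rw [integral_div, integral_exp_neg_Ioi_zero]
        rw [this]
      rw [this]
      simp [Real.exp_zero]
      ring
    rw [← hindf, integral_indicator measurableSet_Ioi, ← Ioc_union_Ioi_eq_Ioi hd.le,
      setIntegral_union (Ioc_disjoint_Ioi le_rfl) measurableSet_Ioi hIoc hIoi,
      hIocval, hIoival, max_eq_left (by linarith : (0:ℝ) ≤ -d), abs_of_neg hd]
    ring


lemma keyF (c : ℝ) :
    Integrable (fun r : ℝ => max (c - r) 0 * (Real.exp (-|r|) / 2)) ∧
    ∫ r : ℝ, max (c - r) 0 * (Real.exp (-|r|) / 2) = max c 0 + Real.exp (-|c|) / 2 := by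
  have h := keyG (-c)
  have hfun : (fun r : ℝ => max (c - r) 0 * (Real.exp (-|r|) / 2))
      = fun r : ℝ => max (-r - -c) 0 * (Real.exp (-|(-r)|) / 2) := by
    funext r
    rw [abs_neg]
    ring_nf
  constructor
  · rw [hfun]
    exact h.1.comp_neg
  · rw [hfun]
    have : ∫ r : ℝ, max (-r - -c) 0 * (Real.exp (-|(-r)|) / 2)
        = ∫ r : ℝ, max (r - -c) 0 * (Real.exp (-|r|) / 2) :=
      integral_neg_eq_self (fun r : ℝ => max (r - -c) 0 * (Real.exp (-|r|) / 2)) volume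
    rw [this, h.2, neg_neg, abs_neg]

lemma wInt :
    Integrable (fun r : ℝ => Real.exp (-|r|) / 2) ∧
    ∫ r : ℝ, Real.exp (-|r|) / 2 = 1 := by
  have hbase : IntegrableOn (fun r : ℝ => Real.exp r / 2) (Iic (0:ℝ)) :=
    (integrableOn_exp_Iic 0).div_const 2
  have hIic : IntegrableOn (fun r : ℝ => Real.exp (-|r|) / 2) (Iic (0:ℝ)) :=
    hbase.congr_fun (fun r hr => by simp [abs_of_nonpos (mem_Iic.1 hr)]) measurableSet_Iic
  have hIoi : IntegrableOn (fun r : ℝ => Real.exp (-|r|) / 2) (Ioi (0:ℝ)) := by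
    have h0 : IntegrableOn (fun r : ℝ => Real.exp (-r) / 2) (Ioi (0:ℝ)) := by
      simpa [IntegrableOn] using (exp_neg_integrableOn_Ioi 0 one_pos).div_const 2
    exact h0.congr_fun (fun r hr => by simp [abs_of_pos (mem_Ioi.1 hr)]) measurableSet_Ioi
  constructor
  · have := hIic.union hIoi
    rwa [Iic_union_Ioi, integrableOn_univ] at this
  · rw [← setIntegral_univ, ← Iic_union_Ioi (a := (0:ℝ)),
      setIntegral_union (Iic_disjoint_Ioi le_rfl) measurableSet_Ioi hIic hIoi]
    have h1 : ∫ r in Iic (0:ℝ), Real.exp (-|r|) / 2 = 1 / 2 := by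
      rw [setIntegral_congr_fun measurableSet_Iic
        (fun r hr => by simp [abs_of_nonpos (mem_Iic.1 hr)] : EqOn _ (fun r : ℝ => Real.exp r / 2) _),
        integral_div, integral_exp_Iic_zero]
    have h2 : ∫ r in Ioi (0:ℝ), Real.exp (-|r|) / 2 = 1 / 2 := by
      rw [setIntegral_congr_fun measurableSet_Ioi
        (fun r hr => by simp [abs_of_pos (mem_Ioi.1 hr)] : EqOn _ (fun r : ℝ => Real.exp (-r) / 2) _),
        integral_div, integral_exp_neg_Ioi_zero]
    rw [h1, h2]
    norm_num

lemma rwInt :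
    Integrable (fun r : ℝ => r * (Real.exp (-|r|) / 2)) ∧
    ∫ r : ℝ, r * (Real.exp (-|r|) / 2) = 0 := by
  have h1 := keyG 0
  have h2 := keyF 0
  have hfun : (fun r : ℝ => r * (Real.exp (-|r|) / 2))
      = fun r : ℝ => max (r - 0) 0 * (Real.exp (-|r|) / 2)
          - max (0 - r) 0 * (Real.exp (-|r|) / 2) := by
    funext r
    rcases le_total r 0 with h | h
    · rw [max_eq_right (by linarith), max_eq_left (by linarith)]
      ring
    · rw [max_eq_left (by linarith), max_eq_right (by linarith)]
      ring
  constructor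
  · rw [hfun]; exact h1.1.sub h2.1
  · rw [hfun, integral_sub h1.1 h2.1, h1.2, h2.2]
    norm_num


lemma thetaProj_eq {α β : ℝ} (hab : α ≤ β) (s : ℝ) :
    thetaProj α β s = s + max (α - s) 0 - max (s - β) 0 := by
  unfold thetaProj
  rcases le_total s α with h | h
  · rw [min_eq_left (h.trans hab), max_eq_left h, max_eq_left (by linarith : (0:ℝ) ≤ α - s),
      max_eq_right (by linarith : s - β ≤ 0)]
    ring
  · rcases le_total s β with h' | h'
    · rw [min_eq_left h', max_eq_right h, max_eq_right (by linarith : α - s ≤ 0),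
        max_eq_right (by linarith : s - β ≤ 0)]
      ring
    · rw [min_eq_right h', max_eq_right hab, max_eq_right (by linarith : α - s ≤ 0),
        max_eq_left (by linarith : (0:ℝ) ≤ s - β)]
      ring

theorem thetaProj'_eq (α β : ℝ) (hab : α ≤ β) (t : ℝ) :
    thetaProj' α β t =
      thetaProj α β t + (Real.exp (-|t - α|) - Real.exp (-|t - β|)) / 2 ∧
    |thetaProj' α β t - thetaProj α β t| ≤ 1 := by
  have hdecomp : (fun r : ℝ => thetaProj α β (r + t) * (Real.exp (-|r|) / 2))
      = fun r : ℝ =>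
        (r * (Real.exp (-|r|) / 2) + t * (Real.exp (-|r|) / 2)
          + max ((α - t) - r) 0 * (Real.exp (-|r|) / 2))
          - max (r - (β - t)) 0 * (Real.exp (-|r|) / 2) := by
    funext r
    rw [thetaProj_eq hab (r + t), show α - (r + t) = (α - t) - r by ring,
      show r + t - β = r - (β - t) by ring]
    ring
  have hval : thetaProj' α β t
      = (0 + t * 1 + (max (α - t) 0 + Real.exp (-|α - t|) / 2))
        - (max (-(β - t)) 0 + Real.exp (-|β - t|) / 2) := by
    have hA : Integrable (fun r : ℝ => r * (Real.exp (-|r|) / 2) + t * (Real.exp (-|r|) / 2)) := by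
      exact rwInt.1.add (wInt.1.const_mul t)
    have hB : Integrable (fun r : ℝ => r * (Real.exp (-|r|) / 2) + t * (Real.exp (-|r|) / 2)
        + max ((α - t) - r) 0 * (Real.exp (-|r|) / 2)) := by
      exact hA.add (keyF (α - t)).1
    rw [thetaProj', hdecomp,
      integral_sub hB (keyG (β - t)).1,
      integral_add hA (keyF (α - t)).1,
      integral_add rwInt.1 (wInt.1.const_mul t), rwInt.2, (keyF (α - t)).2, (keyG (β - t)).2,
      integral_const_mul, wInt.2]
  have habs1 : |α - t| = |t - α| := abs_sub_comm _ _
  have habs2 : |β - t| = |t - β| := abs_sub_comm _ _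
  have hmax : max (-(β - t)) 0 = max (t - β) 0 := by rw [neg_sub]
  have h1 : thetaProj' α β t =
      thetaProj α β t + (Real.exp (-|t - α|) - Real.exp (-|t - β|)) / 2 := by
    rw [hval, thetaProj_eq hab t, habs1, habs2, hmax]
    ring
  refine ⟨h1, ?_⟩
  rw [h1, add_sub_cancel_left]
  have e1 : Real.exp (-|t - α|) ≤ 1 := by
    rw [← Real.exp_zero]
    exact Real.exp_le_exp.2 (neg_nonpos.2 (abs_nonneg _))
  have e2 : Real.exp (-|t - β|) ≤ 1 := by
    rw [← Real.exp_zero]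
    exact Real.exp_le_exp.2 (neg_nonpos.2 (abs_nonneg _))
  have p1 := Real.exp_pos (-|t - α|)
  have p2 := Real.exp_pos (-|t - β|)
  rw [abs_le]
  constructor <;> [linarith; linarith]
end

section
/- Let α ≤ β be real numbers and θ'[α,β;t] := ∫_{-∞}^{∞} θ[α,β;r+t]·(e^{-|r|}/2) dr, where θ[α,β;·] is the projection of ℝ onto [α,β]. Then the derivative of θ'[α,β;·] at t equals (e^{t-α} - e^{t-β})/2 if t ≤ α, equals 1 - (e^{α-t} + e^{t-β})/2 if α ≤ t ≤ β, and equals (-e^{α-t} + e^{β-t})/2 if t ≥ β. -/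
open MeasureTheory Set Real

lemma lap_integrable : Integrable (fun r : ℝ => Real.exp (-|r|) / 2) := by
  have h1 : IntegrableOn (fun r : ℝ => Real.exp (-|r|) / 2) (Iic 0) := by
    refine IntegrableOn.congr_fun ((integrableOn_exp_Iic 0).div_const 2)
      (fun x hx => ?_) measurableSet_Iic
    rw [abs_of_nonpos hx, neg_neg]
  have h2 : IntegrableOn (fun r : ℝ => Real.exp (-|r|) / 2) (Ioi 0) := by
    refine IntegrableOn.congr_fun ((exp_neg_integrableOn_Ioi 0 one_pos).div_const 2)
      (fun x hx => ?_) measurableSet_Ioi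
    rw [abs_of_pos hx, neg_one_mul]
  rw [← integrableOn_univ, ← Iic_union_Ioi (a := (0:ℝ))]
  exact h1.union h2

lemma theta_lip (α β x y : ℝ) : |thetaProj α β x - thetaProj α β y| ≤ |x - y| := by
  unfold thetaProj
  rw [max_comm α (min x β), max_comm α (min y β)]
  calc |max (min x β) α - max (min y β) α| ≤ |min x β - min y β| :=
        abs_max_sub_max_le_abs _ _ _
    _ ≤ max |x - y| |β - β| := abs_min_sub_min_le_max _ _ _ _
    _ ≤ |x - y| := by simp

lemma theta_cont (α β : ℝ) : Continuous (thetaProj α β) :=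
  continuous_const.max (continuous_id.min continuous_const)

lemma lap_cont : Continuous (fun r : ℝ => Real.exp (-|r|) / 2) :=
  (Real.continuous_exp.comp continuous_abs.neg).div_const 2

lemma thetaProj'_hasDerivAt (α β : ℝ) (hab : α ≤ β) (t : ℝ) :
    HasDerivAt (thetaProj' α β)
      (∫ r in Ioo (α - t) (β - t), Real.exp (-|r|) / 2) t := by
  set φ : ℝ → ℝ := fun r => Real.exp (-|r|) / 2 with hφ
  set F' : ℝ → ℝ := (Ioo (α - t) (β - t)).indicator φ with hF'
  have hone : ∀ c : ℝ, ∀ᵐ (r : ℝ), r ≠ c := by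
    intro c
    rw [ae_iff]
    simp [Set.setOf_eq_eq_singleton, measure_singleton]
  have hae : ∀ᵐ (r : ℝ), r ≠ α - t ∧ r ≠ β - t := (hone (α - t)).and (hone (β - t))
  have main := hasDerivAt_integral_of_dominated_loc_of_lip
      (F := fun x r => thetaProj α β (r + x) * φ r) (F' := F') (x₀ := t)
      (bound := φ) (s := Metric.ball t 1) (Metric.ball_mem_nhds t one_pos)
      (Filter.Eventually.of_forall fun x =>
        (((theta_cont α β).comp (continuous_id.add continuous_const)).mul
          lap_cont).aestronglyMeasurable)
      ?_ ?_ ?_ lap_integrable ?_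
  · have : (∫ r, F' r) = ∫ r in Ioo (α - t) (β - t), φ r := by
      rw [hF', integral_indicator measurableSet_Ioo]
    rw [← this]
    exact main.2
  · -- integrability at t
    refine lap_integrable.bdd_mul
      (((theta_cont α β).comp (continuous_id.add continuous_const)).aestronglyMeasurable)
      (c := max |α| |β|) (Filter.Eventually.of_forall fun r => ?_)
    rw [Real.norm_eq_abs]
    refine abs_le.mpr ⟨?_, ?_⟩
    · calc -max |α| |β| ≤ -|α| := by simp
        _ ≤ α := neg_abs_le α
        _ ≤ thetaProj α β (r + t) := le_max_left _ _
    · calc thetaProj α β (r + t) ≤ max α β := max_le_max le_rfl (min_le_right _ _)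
        _ ≤ max |α| |β| := max_le_max (le_abs_self _) (le_abs_self _)
  · exact ((lap_cont.measurable).indicator measurableSet_Ioo).aestronglyMeasurable
  · -- Lipschitz
    refine Filter.Eventually.of_forall fun r => LipschitzWith.lipschitzOnWith ?_
    refine LipschitzWith.of_dist_le_mul fun x y => ?_
    rw [Real.dist_eq, Real.dist_eq, Real.coe_nnabs]
    calc |thetaProj α β (r + x) * φ r - thetaProj α β (r + y) * φ r|
        = |thetaProj α β (r + x) - thetaProj α β (r + y)| * |φ r| := by
          rw [← sub_mul, abs_mul]
      _ ≤ |x - y| * |φ r| := by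
          refine mul_le_mul_of_nonneg_right ?_ (abs_nonneg _)
          calc |thetaProj α β (r + x) - thetaProj α β (r + y)| ≤ |(r + x) - (r + y)| :=
                theta_lip α β _ _
            _ = |x - y| := by ring_nf
      _ = |φ r| * |x - y| := mul_comm _ _
  · -- a.e. differentiability at t
    filter_upwards [hae] with r hr
    obtain ⟨hr1, hr2⟩ := hr
    rcases lt_trichotomy (r + t) α with h | h | h
    · -- locally constant α
      have hF'0 : F' r = 0 := by
        rw [hF', indicator_of_notMem]
        exact fun hmem => absurd hmem.1 (not_lt.mpr (by linarith))
      rw [hF'0]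
      have hev : ∀ᶠ x in nhds t, thetaProj α β (r + x) * φ r = α * φ r := by
        have : ∀ᶠ x in nhds t, r + x < α := by
          have hcont : Filter.Tendsto (fun x : ℝ => r + x) (nhds t) (nhds (r + t)) :=
            (continuous_const.add continuous_id).continuousAt
        -- r + t < α
          exact hcont.eventually (eventually_lt_nhds h)
        filter_upwards [this] with x hx
        have hxb : r + x ≤ β := by linarith
        unfold thetaProj
        rw [min_eq_left hxb, max_eq_left hx.le]
      have : HasDerivAt (fun _ : ℝ => α * φ r) 0 t := hasDerivAt_const t (α * φ r)
      exact this.congr_of_eventuallyEq hev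
    · exact absurd (by linarith : r = α - t) hr1
    · rcases lt_trichotomy (r + t) β with h2 | h2 | h2
      · -- middle region: identity
        have hF'v : F' r = φ r := by
          rw [hF', indicator_of_mem (Set.mem_Ioo.mpr ⟨by linarith, by linarith⟩)]
        rw [hF'v]
        have hev : ∀ᶠ x in nhds t, thetaProj α β (r + x) * φ r = (r + x) * φ r := by
          have hcont : Filter.Tendsto (fun x : ℝ => r + x) (nhds t) (nhds (r + t)) :=
            (continuous_const.add continuous_id).continuousAt
          have e1 : ∀ᶠ x in nhds t, α < r + x := hcont.eventually (eventually_gt_nhds h)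
          have e2 : ∀ᶠ x in nhds t, r + x < β := hcont.eventually (eventually_lt_nhds h2)
          filter_upwards [e1, e2] with x hx1 hx2
          unfold thetaProj
          rw [min_eq_left hx2.le, max_eq_right hx1.le]
        have hd : HasDerivAt (fun x : ℝ => (r + x) * φ r) (1 * φ r) t :=
          (((hasDerivAt_id t).const_add r)).mul_const (φ r)
        rw [one_mul] at hd
        exact hd.congr_of_eventuallyEq hev
      · exact absurd (by linarith : r = β - t) hr2
      · -- locally constant β
        have hF'0 : F' r = 0 := by
          rw [hF', indicator_of_notMem]
          exact fun hmem => absurd hmem.2 (not_lt.mpr (by linarith))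
        rw [hF'0]
        have hev : ∀ᶠ x in nhds t, thetaProj α β (r + x) * φ r = max α β * φ r := by
          have hcont : Filter.Tendsto (fun x : ℝ => r + x) (nhds t) (nhds (r + t)) :=
            (continuous_const.add continuous_id).continuousAt
          have e1 : ∀ᶠ x in nhds t, β < r + x := hcont.eventually (eventually_gt_nhds h2)
          filter_upwards [e1] with x hx
          unfold thetaProj
          rw [min_eq_right hx.le]
        have : HasDerivAt (fun _ : ℝ => max α β * φ r) 0 t := hasDerivAt_const t _
        exact this.congr_of_eventuallyEq hev

lemma int_lap_of_nonneg {a b : ℝ} (ha : 0 ≤ a) (hab : a ≤ b) :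
    ∫ r in a..b, Real.exp (-|r|) / 2 = (Real.exp (-a) - Real.exp (-b)) / 2 := by
  rw [show (∫ r in a..b, Real.exp (-|r|) / 2) = ∫ r in a..b, Real.exp (-r) / 2 from
    intervalIntegral.integral_congr (fun r hr => by
      rw [Set.uIcc_of_le hab] at hr
      rw [abs_of_nonneg (le_trans ha hr.1)])]
  rw [intervalIntegral.integral_div, intervalIntegral.integral_comp_neg (fun r => Real.exp r),
    integral_exp]

lemma int_lap_of_nonpos {a b : ℝ} (hb : b ≤ 0) (hab : a ≤ b) :
    ∫ r in a..b, Real.exp (-|r|) / 2 = (Real.exp b - Real.exp a) / 2 := by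
  rw [show (∫ r in a..b, Real.exp (-|r|) / 2) = ∫ r in a..b, Real.exp r / 2 from
    intervalIntegral.integral_congr (fun r hr => by
      rw [Set.uIcc_of_le hab] at hr
      rw [abs_of_nonpos (le_trans hr.2 hb), neg_neg])]
  rw [intervalIntegral.integral_div, integral_exp]

lemma int_lap_mid {a b : ℝ} (ha : a ≤ 0) (hb : 0 ≤ b) :
    ∫ r in a..b, Real.exp (-|r|) / 2 = 1 - (Real.exp a + Real.exp (-b)) / 2 := by
  have hi : ∀ c d : ℝ, IntervalIntegrable (fun r => Real.exp (-|r|) / 2) volume c d :=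
    fun c d => lap_cont.intervalIntegrable c d
  rw [← intervalIntegral.integral_add_adjacent_intervals (b := 0) (hi a 0) (hi 0 b),
    int_lap_of_nonpos le_rfl ha, int_lap_of_nonneg le_rfl hb]
  rw [Real.exp_zero, neg_zero, Real.exp_zero]
  ring

lemma ioo_eq_interval (a b : ℝ) (hab : a ≤ b) :
    (∫ r in Ioo a b, Real.exp (-|r|) / 2) = ∫ r in a..b, Real.exp (-|r|) / 2 := by
  rw [intervalIntegral.integral_of_le hab, integral_Ioc_eq_integral_Ioo]

theorem thetaProj'_deriv (α β : ℝ) (hab : α ≤ β) (t : ℝ) :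
    (t ≤ α → HasDerivAt (thetaProj' α β)
      ((Real.exp (t - α) - Real.exp (t - β)) / 2) t) ∧
    (α ≤ t → t ≤ β → HasDerivAt (thetaProj' α β)
      (1 - (Real.exp (α - t) + Real.exp (t - β)) / 2) t) ∧
    (β ≤ t → HasDerivAt (thetaProj' α β)
      ((-Real.exp (α - t) + Real.exp (β - t)) / 2) t) := by
  have key := thetaProj'_hasDerivAt α β hab t
  rw [ioo_eq_interval _ _ (by linarith)] at key
  refine ⟨fun h1 => ?_, fun h1 h2 => ?_, fun h1 => ?_⟩
  · rw [int_lap_of_nonneg (by linarith) (by linarith), neg_sub, neg_sub] at key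
    exact key
  · rw [int_lap_mid (by linarith) (by linarith), neg_sub] at key
    exact key
  · rw [int_lap_of_nonpos (by linarith) (by linarith)] at key
    convert key using 1
    ring
end

section
/- Let α ≤ β be reals, θ'[α,β;·] the smooth-out of the projection onto [α,β] as above, and let ε ∈ [0, (1 - e^{α-β})/2]. If t ∈ ℝ satisfies θ'[α,β;t] ∈ [α+ε, β-ε], then the derivative of θ'[α,β;·] at t is at least ε. -/
open Real MeasureTheory Set Filter Topology

namespace ThetaAux

/-- The smoothed positive-part function. -/
noncomputable def Fone (x : ℝ) : ℝ := max x 0 + Real.exp (-|x|) / 2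

/-- Its derivative. -/
noncomputable def gone (x : ℝ) : ℝ :=
  if 0 ≤ x then 1 - Real.exp (-x) / 2 else Real.exp x / 2

lemma ker_integrable : Integrable (fun r : ℝ => Real.exp (-|r|) / 2) := by
  have h1 : IntegrableOn (fun r : ℝ => Real.exp (-|r|) / 2) (Iic 0) := by
    refine IntegrableOn.congr_fun ((integrableOn_exp_Iic 0).div_const 2) ?_ measurableSet_Iic
    intro x hx
    simp [abs_of_nonpos (mem_Iic.mp hx)]
  have h2 : IntegrableOn (fun r : ℝ => Real.exp (-|r|) / 2) (Ioi 0) := by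
    refine IntegrableOn.congr_fun ((exp_neg_integrableOn_Ioi 0 one_pos).div_const 2) ?_
      measurableSet_Ioi
    intro x hx
    simp [abs_of_pos (mem_Ioi.mp hx)]
  have := h1.union h2
  rwa [Iic_union_Ioi, integrableOn_univ] at this

lemma ker_integral : ∫ r : ℝ, Real.exp (-|r|) / 2 = 1 := by
  have h := integral_comp_abs (f := fun x : ℝ => Real.exp (-x) / 2)
  rw [h]
  have : ∫ x in Ioi (0:ℝ), Real.exp (-x) / 2 = (∫ x in Ioi (0:ℝ), Real.exp (-x)) / 2 := by
    exact integral_div 2 _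
  rw [this, integral_exp_neg_Ioi_zero]
  norm_num

/-- The integrand of `Fone` as an indicator function. -/
lemma max_eq_indicator (x : ℝ) :
    (fun r : ℝ => max (r + x) 0 * (Real.exp (-|r|) / 2)) =
      Set.indicator (Ioi (-x)) (fun r : ℝ => (r + x) * (Real.exp (-|r|) / 2)) := by
  funext r
  by_cases h : r ∈ Ioi (-x)
  · rw [Set.indicator_of_mem h]
    have : (0:ℝ) ≤ r + x := by simp only [mem_Ioi] at h; linarith
    rw [max_eq_left this]
  · rw [Set.indicator_of_notMem h]
    simp only [mem_Ioi, not_lt] at h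
    have : r + x ≤ 0 := by linarith
    rw [max_eq_right this, zero_mul]

lemma integrableOn_lin_Ioi (x a : ℝ) (ha : 0 ≤ a) (hax : 0 ≤ a + x) :
    IntegrableOn (fun r : ℝ => (r + x) * (Real.exp (-|r|) / 2)) (Ioi a) ∧
    ∫ r in Ioi a, (r + x) * (Real.exp (-|r|) / 2) = 0 - -(a + x + 1) * Real.exp (-a) / 2 := by
  have key : ∀ r ∈ Ici a, HasDerivAt (fun r : ℝ => -(r + x + 1) * Real.exp (-r) / 2)
      ((r + x) * (Real.exp (-r) / 2)) r := by
    intro r _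
    have h1 : HasDerivAt (fun r : ℝ => -(r + x + 1)) (-1) r := by
      exact (((hasDerivAt_id' r).add_const x).add_const 1).neg
    have h2 : HasDerivAt (fun r : ℝ => Real.exp (-r)) (-Real.exp (-r)) r := by
      have := (hasDerivAt_neg' r).exp; rw [mul_neg_one] at this; exact this
    have := (h1.mul h2).div_const 2
    exact this.congr_deriv (by ring)
  have hpos : ∀ r ∈ Ioi a, 0 ≤ (r + x) * (Real.exp (-r) / 2) := by
    intro r hr
    have : (0:ℝ) ≤ r + x := by simp only [mem_Ioi] at hr; linarith
    positivity
  have htend : Tendsto (fun r : ℝ => -(r + x + 1) * Real.exp (-r) / 2) atTop (𝓝 0) := by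
    have h1 : Tendsto (fun r : ℝ => r * Real.exp (-r)) atTop (𝓝 0) := by
      simpa using Real.tendsto_pow_mul_exp_neg_atTop_nhds_zero 1
    have h2 : Tendsto (fun r : ℝ => Real.exp (-r)) atTop (𝓝 0) := by
      simpa using Real.tendsto_pow_mul_exp_neg_atTop_nhds_zero 0
    have h3 : Tendsto (fun r : ℝ => -(r * Real.exp (-r) + (x + 1) * Real.exp (-r)) / 2)
        atTop (𝓝 (-(0 + (x + 1) * 0) / 2)) := ((h1.add (h2.const_mul (x + 1))).neg).div_const 2
    have h4 : -(0 + (x + 1) * (0:ℝ)) / 2 = 0 := by ring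
    rw [h4] at h3
    exact h3.congr (fun r => by ring)
  have hint := integrableOn_Ioi_deriv_of_nonneg' key hpos htend
  have hval := integral_Ioi_of_hasDerivAt_of_nonneg' key hpos htend
  have habs : EqOn (fun r : ℝ => (r + x) * (Real.exp (-r) / 2))
      (fun r : ℝ => (r + x) * (Real.exp (-|r|) / 2)) (Ioi a) := by
    intro r hr
    have : (0:ℝ) < r ∨ r = 0 := by
      rcases lt_or_eq_of_le (le_of_lt (lt_of_le_of_lt ha (hr : a < r))) with h | h
      · exact Or.inl h
      · exact Or.inr h.symm
    rcases this with h | h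
    · simp [abs_of_pos h]
    · simp [h]
  constructor
  · exact (hint.congr_fun habs measurableSet_Ioi)
  · rw [← setIntegral_congr_fun measurableSet_Ioi habs, hval]

lemma Fone_integral_nonpos (x : ℝ) (hx : x ≤ 0) :
    Integrable (fun r : ℝ => max (r + x) 0 * (Real.exp (-|r|) / 2)) ∧
    ∫ r : ℝ, max (r + x) 0 * (Real.exp (-|r|) / 2) = Fone x := by
  obtain ⟨hint, hval⟩ := integrableOn_lin_Ioi x (-x) (by linarith) (by linarith)
  rw [max_eq_indicator]
  constructor
  · rw [integrable_indicator_iff measurableSet_Ioi]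
    exact hint
  · rw [integral_indicator measurableSet_Ioi, hval, Fone, max_eq_right hx,
      abs_of_nonpos hx, neg_neg]
    ring

lemma Fone_integral_nonneg (x : ℝ) (hx : 0 ≤ x) :
    Integrable (fun r : ℝ => max (r + x) 0 * (Real.exp (-|r|) / 2)) ∧
    ∫ r : ℝ, max (r + x) 0 * (Real.exp (-|r|) / 2) = Fone x := by
  obtain ⟨hint0, hval0⟩ := integrableOn_lin_Ioi x 0 le_rfl (by linarith)
  have hsplit : Ioc (-x) 0 ∪ Ioi (0:ℝ) = Ioi (-x) := Ioc_union_Ioi_eq_Ioi (by linarith)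
  have hcont : ContinuousOn (fun r : ℝ => (r + x) * (Real.exp (-|r|) / 2)) (Icc (-x) 0) := by
    fun_prop
  have hintIoc : IntegrableOn (fun r : ℝ => (r + x) * (Real.exp (-|r|) / 2)) (Ioc (-x) 0) :=
    hcont.integrableOn_Icc.mono_set Ioc_subset_Icc_self
  have hintIoi : IntegrableOn (fun r : ℝ => (r + x) * (Real.exp (-|r|) / 2)) (Ioi (-x)) := by
    rw [← hsplit]
    exact hintIoc.union hint0
  -- value of the Ioc part
  have hIocval : ∫ r in Ioc (-x) 0, (r + x) * (Real.exp (-|r|) / 2)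
      = (x - 1) / 2 + Real.exp (-x) / 2 := by
    have heq : EqOn (fun r : ℝ => (r + x) * (Real.exp (-|r|) / 2))
        (fun r : ℝ => (r + x) * (Real.exp r / 2)) (Ioc (-x) 0) := by
      intro r hr
      have : r ≤ 0 := hr.2
      simp [abs_of_nonpos this]
    rw [setIntegral_congr_fun measurableSet_Ioc heq]
    rw [← intervalIntegral.integral_of_le (by linarith : -x ≤ (0:ℝ))]
    have key : ∀ r ∈ uIcc (-x) (0:ℝ), HasDerivAt (fun r : ℝ => (r + x - 1) * Real.exp r / 2)
        ((r + x) * (Real.exp r / 2)) r := by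
      intro r _
      have h1 : HasDerivAt (fun r : ℝ => r + x - 1) 1 r :=
        ((hasDerivAt_id r).add_const x).sub_const 1
      have := (h1.mul (Real.hasDerivAt_exp r)).div_const 2
      exact this.congr_deriv (by ring)
    rw [intervalIntegral.integral_eq_sub_of_hasDerivAt key
      (Continuous.intervalIntegrable (by fun_prop) _ _)]
    simp only [Real.exp_zero, neg_add_rev]
    ring_nf
  rw [max_eq_indicator]
  constructor
  · rw [integrable_indicator_iff measurableSet_Ioi]
    exact hintIoi
  · rw [integral_indicator measurableSet_Ioi, ← hsplit,
      setIntegral_union (Ioc_disjoint_Ioi le_rfl) measurableSet_Ioi hintIoc hint0,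
      hIocval, hval0, Fone, max_eq_left hx, abs_of_nonneg hx]
    simp only [neg_zero, Real.exp_zero, zero_add, mul_one]
    ring

lemma Fone_integrable (x : ℝ) :
    Integrable (fun r : ℝ => max (r + x) 0 * (Real.exp (-|r|) / 2)) := by
  rcases le_total x 0 with h | h
  · exact (Fone_integral_nonpos x h).1
  · exact (Fone_integral_nonneg x h).1

lemma Fone_integral (x : ℝ) :
    ∫ r : ℝ, max (r + x) 0 * (Real.exp (-|r|) / 2) = Fone x := by
  rcases le_total x 0 with h | h
  · exact (Fone_integral_nonpos x h).2
  · exact (Fone_integral_nonneg x h).2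

lemma thetaProj_eq (α β : ℝ) (hab : α ≤ β) (s : ℝ) :
    thetaProj α β s = α + max (s - α) 0 - max (s - β) 0 := by
  unfold thetaProj
  rcases le_total s α with h | h
  · rw [min_eq_left (le_trans h hab), max_eq_left h,
      max_eq_right (by linarith : s - α ≤ 0), max_eq_right (by linarith : s - β ≤ 0)]
    ring
  · rcases le_total s β with h2 | h2
    · rw [min_eq_left h2, max_eq_right h, max_eq_left (by linarith : (0:ℝ) ≤ s - α),
        max_eq_right (by linarith : s - β ≤ 0)]
      ring
    · rw [min_eq_right h2, max_eq_right hab, max_eq_left (by linarith : (0:ℝ) ≤ s - α),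
        max_eq_left (by linarith : (0:ℝ) ≤ s - β)]
      ring

lemma thetaProj'_eq (α β : ℝ) (hab : α ≤ β) :
    thetaProj' α β = fun t => α + Fone (t - α) - Fone (t - β) := by
  funext t
  unfold thetaProj'
  have heq : (fun r : ℝ => thetaProj α β (r + t) * (Real.exp (-|r|) / 2)) =
      fun r : ℝ => α * (Real.exp (-|r|) / 2) + max (r + (t - α)) 0 * (Real.exp (-|r|) / 2)
        - max (r + (t - β)) 0 * (Real.exp (-|r|) / 2) := by
    funext r
    rw [thetaProj_eq α β hab (r + t)]
    have h1 : r + t - α = r + (t - α) := by ring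
    have h2 : r + t - β = r + (t - β) := by ring
    rw [h1, h2]
    ring
  rw [heq]
  have I1 : Integrable (fun r : ℝ => α * (Real.exp (-|r|) / 2)) := ker_integrable.const_mul α
  have I2 := Fone_integrable (t - α)
  have I3 := Fone_integrable (t - β)
  have I12 : Integrable (fun r : ℝ =>
      α * (Real.exp (-|r|) / 2) + max (r + (t - α)) 0 * (Real.exp (-|r|) / 2)) := I1.add I2
  rw [integral_sub I12 I3, integral_add I1 I2,
    integral_const_mul, ker_integral, Fone_integral, Fone_integral]
  ring

lemma gone_of_nonpos {x : ℝ} (hx : x ≤ 0) : gone x = Real.exp x / 2 := by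
  rcases eq_or_lt_of_le hx with h | h
  · rw [gone, h, if_pos le_rfl]
    norm_num
  · rw [gone, if_neg (not_le.mpr h)]

lemma gone_of_nonneg {x : ℝ} (hx : 0 ≤ x) : gone x = 1 - Real.exp (-x) / 2 := by
  rw [gone, if_pos hx]

lemma hasDerivAt_Fone (x : ℝ) : HasDerivAt Fone (gone x) x := by
  rcases lt_trichotomy x 0 with hx | hx | hx
  · have h : HasDerivAt (fun y : ℝ => Real.exp y / 2) (Real.exp x / 2) x :=
      (Real.hasDerivAt_exp x).div_const 2
    have heq : Fone =ᶠ[𝓝 x] fun y : ℝ => Real.exp y / 2 := by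
      filter_upwards [Iio_mem_nhds hx] with y hy
      have hy' : y < 0 := hy
      rw [Fone, max_eq_right hy'.le, abs_of_nonpos hy'.le, neg_neg, zero_add]
    rw [gone, if_neg (not_le.mpr hx)]
    exact h.congr_of_eventuallyEq heq
  · subst hx
    have hIic : HasDerivWithinAt Fone (1/2 : ℝ) (Iic 0) 0 := by
      have h : HasDerivAt (fun y : ℝ => Real.exp y / 2) ((1:ℝ)/2) 0 := by
        simpa using (Real.hasDerivAt_exp 0).div_const 2
      refine (h.hasDerivWithinAt).congr ?_ ?_
      · intro y hy
        rw [Fone, max_eq_right (hy : y ≤ (0:ℝ)), abs_of_nonpos (hy : y ≤ (0:ℝ)), neg_neg,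
          zero_add]
      · simp [Fone]
    have hIci : HasDerivWithinAt Fone (1/2 : ℝ) (Ici 0) 0 := by
      have h : HasDerivAt (fun y : ℝ => y + Real.exp (-y) / 2) ((1:ℝ)/2) 0 := by
        have h2 : HasDerivAt (fun y : ℝ => Real.exp (-y)) (-Real.exp (-0:ℝ)) 0 := by
          have := (hasDerivAt_neg' (0:ℝ)).exp; rw [mul_neg_one] at this; exact this
        have := (hasDerivAt_id (0:ℝ)).add (h2.div_const 2)
        exact this.congr_deriv (by norm_num)
      refine (h.hasDerivWithinAt).congr ?_ ?_
      · intro y hy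
        rw [Fone, max_eq_left (hy : (0:ℝ) ≤ y), abs_of_nonneg (hy : (0:ℝ) ≤ y)]
      · simp [Fone]
    have := hIic.union hIci
    rw [Iic_union_Ici] at this
    rw [gone, if_pos le_rfl]
    norm_num
    exact this.hasDerivAt (by simp)
  · have h : HasDerivAt (fun y : ℝ => y + Real.exp (-y) / 2) (1 - Real.exp (-x) / 2) x := by
      have h2 : HasDerivAt (fun y : ℝ => Real.exp (-y)) (-Real.exp (-x)) x := by
        have := (hasDerivAt_neg' x).exp; rw [mul_neg_one] at this; exact this
      have := (hasDerivAt_id x).add (h2.div_const 2)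
      exact this.congr_deriv (by ring)
    have heq : Fone =ᶠ[𝓝 x] fun y : ℝ => y + Real.exp (-y) / 2 := by
      filter_upwards [Ioi_mem_nhds hx] with y hy
      have hy' : (0:ℝ) < y := hy
      rw [Fone, max_eq_left hy'.le, abs_of_nonneg hy'.le]
    rw [gone, if_pos hx.le]
    exact h.congr_of_eventuallyEq heq

lemma deriv_thetaProj' (α β : ℝ) (hab : α ≤ β) (t : ℝ) :
    deriv (thetaProj' α β) t = gone (t - α) - gone (t - β) := by
  rw [thetaProj'_eq α β hab]
  have h1 : HasDerivAt (fun t : ℝ => Fone (t - α)) (gone (t - α)) t := by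
    have := (hasDerivAt_Fone (t - α)).comp t ((hasDerivAt_id t).sub_const α)
    exact this.congr_deriv (mul_one _)
  have h2 : HasDerivAt (fun t : ℝ => Fone (t - β)) (gone (t - β)) t := by
    have := (hasDerivAt_Fone (t - β)).comp t ((hasDerivAt_id t).sub_const β)
    exact this.congr_deriv (mul_one _)
  exact (((h1.const_add α).sub h2)).deriv

end ThetaAux

theorem thetaProj'_deriv_lower_bound (α β : ℝ) (hab : α ≤ β) (ε : ℝ)
    (hε : ε ∈ Set.Icc 0 ((1 - Real.exp (α - β)) / 2)) (t : ℝ)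
    (ht : thetaProj' α β t ∈ Set.Icc (α + ε) (β - ε)) :
    ε ≤ deriv (thetaProj' α β) t := by
  obtain ⟨hε0, hεu⟩ := hε
  rw [ThetaAux.thetaProj'_eq α β hab] at ht
  obtain ⟨ht1, ht2⟩ := ht
  simp only at ht1 ht2
  rw [ThetaAux.deriv_thetaProj' α β hab t]
  have hvu : t - β ≤ t - α := by linarith
  rcases lt_or_ge (t - α) 0 with hu | hu
  · -- t < α : both arguments negative
    have hv : t - β < 0 := lt_of_le_of_lt hvu hu
    rw [ThetaAux.gone_of_nonpos hu.le, ThetaAux.gone_of_nonpos hv.le]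
    have hF1 : ThetaAux.Fone (t - α) = Real.exp (t - α) / 2 := by
      rw [ThetaAux.Fone, max_eq_right hu.le, abs_of_nonpos hu.le, neg_neg, zero_add]
    have hF2 : ThetaAux.Fone (t - β) = Real.exp (t - β) / 2 := by
      rw [ThetaAux.Fone, max_eq_right hv.le, abs_of_nonpos hv.le, neg_neg, zero_add]
    rw [hF1, hF2] at ht1
    linarith
  · rcases le_or_gt (t - β) 0 with hv | hv
    · -- α ≤ t ≤ β : middle case
      rw [ThetaAux.gone_of_nonneg hu, ThetaAux.gone_of_nonpos hv]
      have ha1 : Real.exp (-(t - α)) ≤ 1 := Real.exp_le_one_iff.mpr (by linarith)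
      have hb1 : Real.exp (t - β) ≤ 1 := Real.exp_le_one_iff.mpr (by linarith)
      have hprod : Real.exp (-(t - α)) * Real.exp (t - β) = Real.exp (α - β) := by
        rw [← Real.exp_add]
        ring_nf
      nlinarith [(1 - Real.exp (-(t - α))) * (1 - Real.exp (t - β))]
    · -- β < t : both nonneg
      have hu' : (0:ℝ) ≤ t - β := hv.le
      rw [ThetaAux.gone_of_nonneg hu, ThetaAux.gone_of_nonneg hu']
      have hF1 : ThetaAux.Fone (t - α) = (t - α) + Real.exp (-(t - α)) / 2 := by
        rw [ThetaAux.Fone, max_eq_left hu, abs_of_nonneg hu]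
      have hF2 : ThetaAux.Fone (t - β) = (t - β) + Real.exp (-(t - β)) / 2 := by
        rw [ThetaAux.Fone, max_eq_left hu', abs_of_nonneg hu']
      rw [hF1, hF2] at ht2
      linarith
end
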